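/- Let n ≥ 6 and let i,j be integers with 0 < i < j < n/2, gcd(n,i,j)=1, and i + j = n/2. Then in the circulant graph C_n(i,j), for every a ∈ ℤ/nℤ, the vertices a and a + n/2 are nonadjacent twins. -/

import Mathlib

/-- The two-generator circulant graph `C_n(i,j)` on `ℤ/nℤ`:
distinct `a, b` are adjacent iff `a - b ∈ {i, -i, j, -j}`. -/
def circulant (n : ℕ) (i j : ZMod n) : SimpleGraph (ZMod n) where
  Adj a b := a ≠ b ∧ (a - b = i ∨ a - b = -i ∨ a - b = j ∨ a - b = -j)
  symm := by
    constructor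
    rintro a b ⟨hab, h⟩
    refine ⟨fun h' => hab h'.symm, ?_⟩
    have hba : b - a = -(a - b) := by ring
    rcases h with h | h | h | h <;> rw [hba, h] <;> simp
  loopless := by constructor; rintro a ⟨h, -⟩; exact h rfl

theorem stmt_10 (n i j : ℕ) (hn : 6 ≤ n) (hi : 0 < i) (hij : i < j)
    (hj : 2 * j < n) (hgcd : Nat.gcd n (Nat.gcd i j) = 1)
    (hsum : 2 * (i + j) = n) :
    ∀ a : ZMod n,
      ¬ (circulant n (i : ZMod n) (j : ZMod n)).Adj a (a + ((n / 2 : ℕ) : ZMod n)) ∧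
      (circulant n (i : ZMod n) (j : ZMod n)).neighborSet a =
        (circulant n (i : ZMod n) (j : ZMod n)).neighborSet (a + ((n / 2 : ℕ) : ZMod n)) := by
  haveI : NeZero n := ⟨by omega⟩
  have hhalf : n / 2 = i + j := by omega
  set I : ZMod n := (i : ZMod n) with hI
  set J : ZMod n := (j : ZMod n) with hJ
  have hnz : ∀ k : ℕ, 0 < k → k < n → (k : ZMod n) ≠ 0 := by
    intro k hk1 hk2 h
    rw [ZMod.natCast_eq_zero_iff] at h
    exact absurd (Nat.le_of_dvd hk1 h) (by omega)
  have h0 : I + J + (I + J) = 0 := by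
    have h : ((2 * (i + j) : ℕ) : ZMod n) = 0 := by rw [hsum]; exact ZMod.natCast_self n
    push_cast at h; rw [hI, hJ]; linear_combination h
  -- nonzero facts
  have hIne : I ≠ 0 := hnz i hi (by omega)
  have hJne : J ≠ 0 := hnz j (by omega) (by omega)
  have hHne : I + J ≠ 0 := by
    have := hnz (i + j) (by omega) (by omega); push_cast at this; exact this
  have h2ij : I + I + J ≠ 0 := by
    have := hnz (2 * i + j) (by omega) (by omega); push_cast at this
    intro h; exact this (by linear_combination h)
  have hi2j : I + J + J ≠ 0 := by
    have := hnz (i + 2 * j) (by omega) (by omega); push_cast at this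
    intro h; exact this (by linear_combination h)
  have hcast : ((n / 2 : ℕ) : ZMod n) = I + J := by rw [hhalf]; push_cast; rfl
  rw [hcast]
  -- key step: adjacency is preserved under shifting by I + J
  have key : ∀ x b : ZMod n, (circulant n I J).Adj x b → (circulant n I J).Adj (x + (I + J)) b := by
    rintro x b ⟨hne, hd⟩
    constructor
    · intro h
      have hxb : x - b = -(I + J) := by linear_combination h
      rcases hd with hd | hd | hd | hd
      · exact h2ij (by linear_combination hxb - hd)
      · exact hJne (by linear_combination hxb - hd)
      · exact hi2j (by linear_combination hxb - hd)
      · exact hIne (by linear_combination hxb - hd)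
    · rcases hd with hd | hd | hd | hd
      · exact Or.inr (Or.inr (Or.inr (by linear_combination hd + h0)))
      · exact Or.inr (Or.inr (Or.inl (by linear_combination hd)))
      · exact Or.inr (Or.inl (by linear_combination hd + h0))
      · exact Or.inl (by linear_combination hd)
  intro a
  constructor
  · rintro ⟨hne, hd⟩
    have hab : a - (a + (I + J)) = -(I + J) := by ring
    rcases hd with hd | hd | hd | hd
    · exact h2ij (by linear_combination hab - hd)
    · exact hJne (by linear_combination hab - hd)
    · exact hi2j (by linear_combination hab - hd)
    · exact hIne (by linear_combination hab - hd)
  · ext b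
    simp only [SimpleGraph.mem_neighborSet]
    constructor
    · exact key a b
    · intro h
      have := key _ b h
      have e : a + (I + J) + (I + J) = a := by linear_combination h0
      rwa [e] at this
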